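/- arXiv:1902.10089 — 2 statements merged into one kernel-verified Lean document; each statement's English description precedes it below -/
import Mathlib

section
/- Let a and n be positive integers, m = 2*a*n, and delta in [0, a*n]. Assume the pointwise bound B(y; m, 1/2) >= (2*sqrt(pi)/(e^2*sqrt(a*n))) * exp(-2*(y - a*n)^2/(a*n)) for all integers y in [0,m]. Then the binomial tail satisfies sum_{y = ceil(a*n + delta)}^{m} B(y; m, 1/2) >= (sqrt(pi)/(e^2*sqrt(a))) * exp(-2*(delta + sqrt(n))^2/(a*n)). -/
set_option maxHeartbeats 1000000


/-- Lower bound on the Binomial(m, 1/2) upper tail, where `m = 2 a n`. -/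
theorem stmt_10 (a n : ℕ) (ha : 0 < a) (hn : 0 < n) (δ : ℝ)
    (hδ0 : 0 ≤ δ) (hδ : δ ≤ (a : ℝ) * n) :
    let m := 2 * a * n
    let B : ℕ → ℝ := fun y => (m.choose y : ℝ) * (1 / 2) ^ m
    (∀ y : ℕ, y ≤ m →
        B y ≥ (2 * Real.sqrt Real.pi / (Real.exp 2 * Real.sqrt ((a : ℝ) * n)))
          * Real.exp (-2 * ((y : ℝ) - a * n) ^ 2 / ((a : ℝ) * n))) →
    ∑ y ∈ Finset.Icc ⌈(a : ℝ) * n + δ⌉₊ m, B y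
      ≥ (Real.sqrt Real.pi / (Real.exp 2 * Real.sqrt a))
        * Real.exp (-2 * (δ + Real.sqrt n) ^ 2 / ((a : ℝ) * n)) := by
  intro m B h
  have hm : m = 2 * a * n := rfl
  set A : ℝ := (a : ℝ) * n with hA_def
  have hA : 0 < A := by positivity
  have hmR : (m : ℝ) = 2 * A := by rw [hm]; push_cast; ring
  set c : ℕ := ⌈A + δ⌉₊ with hc_def
  have hcA : A + δ ≤ (c : ℝ) := Nat.le_ceil _
  have hc_lt : (c : ℝ) < A + δ + 1 := Nat.ceil_lt_add_one (by positivity)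
  have hcm : c ≤ m := by
    rw [hc_def, Nat.ceil_le, hmR]; linarith
  have hsqn : (0:ℝ) < Real.sqrt n := Real.sqrt_pos.mpr (by exact_mod_cast hn)
  have hsqn1 : (1:ℝ) ≤ Real.sqrt n := Real.one_le_sqrt.mpr (by exact_mod_cast hn)
  set s : ℕ := ⌊Real.sqrt n⌋₊ with hs_def
  have hs1 : 1 ≤ s := Nat.le_floor (by exact_mod_cast hsqn1)
  have hsle : (s : ℝ) ≤ Real.sqrt n := Nat.floor_le (Real.sqrt_nonneg _)
  have hslt : Real.sqrt n < (s : ℝ) + 1 := Nat.lt_floor_add_one _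
  set e : ℕ := min (c + (s - 1)) m with he_def
  have hce : c ≤ e := le_min (Nat.le_add_right _ _) hcm
  have hem : e ≤ m := min_le_right _ _
  set K : ℕ := e + 1 - c with hK_def
  have hKR : (K : ℝ) = (e : ℝ) + 1 - (c : ℝ) := by
    rw [hK_def]; push_cast [Nat.le_succ_of_le hce]; ring
  set Q : ℝ := δ + Real.sqrt n with hQ_def
  have hQ0 : 0 ≤ Q := by positivity
  set P : ℝ := min Q A with hP_def
  have hP0 : 0 ≤ P := le_min hQ0 hA.le
  have hPQ : P ≤ Q := min_le_left _ _
  have hPA : P ≤ A := min_le_right _ _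
  set L : ℝ := 2 * Real.sqrt Real.pi / (Real.exp 2 * Real.sqrt A) with hL_def
  set C : ℝ := Real.sqrt Real.pi / (Real.exp 2 * Real.sqrt a) with hC_def
  have hCpos : 0 < C := by
    rw [hC_def]
    have : (0:ℝ) < Real.sqrt a := Real.sqrt_pos.mpr (by exact_mod_cast ha)
    positivity
  have hL : L = 2 * C / Real.sqrt n := by
    rw [hL_def, hC_def, hA_def, Real.sqrt_mul (Nat.cast_nonneg a)]
    have h1 : (0:ℝ) < Real.sqrt a := Real.sqrt_pos.mpr (by exact_mod_cast ha)
    have h2 : Real.exp 2 ≠ 0 := (Real.exp_pos 2).ne'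
    field_simp
  set EQ : ℝ := Real.exp (-2 * Q ^ 2 / A) with hEQ_def
  set EP : ℝ := Real.exp (-2 * P ^ 2 / A) with hEP_def
  set E2 : ℝ := Real.exp (2 * (Q ^ 2 - P ^ 2) / A) with hE2_def
  have hEQpos : 0 < EQ := Real.exp_pos _
  have hsplit : EP = EQ * E2 := by
    rw [hEP_def, hEQ_def, hE2_def, ← Real.exp_add]
    congr 1
    field_simp
    ring
  clear_value A c s e K Q P L C EQ EP E2
  -- key counting/exp inequality
  have hK1 : (1:ℝ) ≤ (K : ℝ) := by
    have : 1 ≤ K := by omega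
    exact_mod_cast this
  have key : Real.sqrt n ≤ 2 * (K : ℝ) * E2 := by
    have hE2pos : 0 < E2 := by rw [hE2_def]; exact Real.exp_pos _
    rcases le_or_gt (Real.sqrt n / 2) (A - δ) with hcase | hcase
    · have hKge : Real.sqrt n / 2 ≤ (K : ℝ) := by
        rcases le_or_gt (c + (s - 1)) m with hmin | hmin
        · have he : e = c + (s - 1) := by rw [he_def]; exact min_eq_left hmin
          have hKs : K = s := by omega
          rw [hKs]
          rcases le_or_gt (Real.sqrt n) 2 with h2 | h2
          · have : (1:ℝ) ≤ (s:ℝ) := by exact_mod_cast hs1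
            linarith
          · linarith
        · have he : e = m := by rw [he_def]; exact min_eq_right hmin.le
          have : (K : ℝ) = (m : ℝ) + 1 - c := by rw [hKR, he]
          rw [this, hmR]
          linarith
      have hE2 : (1:ℝ) ≤ E2 := by
        rw [hE2_def]
        apply Real.one_le_exp
        have hPQ2 : P ^ 2 ≤ Q ^ 2 := pow_le_pow_left₀ hP0 hPQ 2
        apply div_nonneg (by linarith) hA.le
      have h2 : 2 * (K:ℝ) * 1 ≤ 2 * (K:ℝ) * E2 :=
        mul_le_mul_of_nonneg_left hE2 (by linarith)
      linarith
    · have hQA : A + Real.sqrt n / 2 < Q := by rw [hQ_def]; linarith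
      have hD : A * Real.sqrt n ≤ Q ^ 2 - P ^ 2 := by
        have h1 : P ^ 2 ≤ A ^ 2 := pow_le_pow_left₀ hP0 hPA 2
        have h2 : (A + Real.sqrt n / 2) ^ 2 ≤ Q ^ 2 :=
          pow_le_pow_left₀ (by positivity) hQA.le 2
        have hsq2 : Real.sqrt n ^ 2 = (n:ℝ) := Real.sq_sqrt (by positivity)
        have h3 : (A + Real.sqrt n / 2) ^ 2
            = A ^ 2 + A * Real.sqrt n + (n:ℝ) / 4 := by
          field_simp [add_sq, hsq2]
          linear_combination 4 * hsq2
        rw [h3] at h2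
        have hn0 : (0:ℝ) ≤ (n:ℝ) := Nat.cast_nonneg n
        nlinarith
      have hexp : Real.exp (2 * Real.sqrt n) ≤ E2 := by
        rw [hE2_def]
        apply Real.exp_le_exp.mpr
        rw [le_div_iff₀ hA]
        nlinarith
      have h1 : 1 + 2 * Real.sqrt n ≤ E2 :=
        le_trans (by linarith [Real.add_one_le_exp (2 * Real.sqrt n)]) hexp
      have h2 : 2 * E2 ≤ 2 * (K:ℝ) * E2 := by nlinarith
      linarith
  -- per-term bound
  have hBnn : ∀ y : ℕ, 0 ≤ B y := by
    intro y
    show (0:ℝ) ≤ (m.choose y : ℝ) * (1 / 2) ^ m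
    positivity
  have hterm : ∀ y ∈ Finset.Icc c e, L * EP ≤ B y := by
    intro y hy
    rw [Finset.mem_Icc] at hy
    have hym : y ≤ m := hy.2.trans hem
    have hB := h y hym
    refine le_trans ?_ hB
    rw [hEP_def]
    apply mul_le_mul_of_nonneg_left _ (by rw [hL_def]; positivity)
    apply Real.exp_le_exp.mpr
    rw [div_le_div_iff_of_pos_right hA]
    have hyl : δ ≤ (y:ℝ) - A := by
      have h1 : (c:ℝ) ≤ (y:ℝ) := Nat.cast_le.mpr hy.1
      linarith
    have hyu1 : (y:ℝ) - A ≤ A := by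
      have h1 : (y:ℝ) ≤ (m:ℝ) := Nat.cast_le.mpr hym
      rw [hmR] at h1
      linarith
    have hyu2 : (y:ℝ) - A ≤ Q := by
      have hec : e ≤ c + (s - 1) := by rw [he_def]; exact min_le_left _ _
      have h1 : (y:ℝ) ≤ ((c + (s - 1) : ℕ) : ℝ) :=
        Nat.cast_le.mpr (hy.2.trans hec)
      have h2 : ((c + (s - 1) : ℕ) : ℝ) = (c:ℝ) + ((s:ℝ) - 1) := by
        push_cast [hs1]
        ring
      rw [hQ_def]
      rw [h2] at h1
      linarith
    have hyP : (y:ℝ) - A ≤ P := by rw [hP_def]; exact le_min hyu2 hyu1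
    have hsq : ((y:ℝ) - A) ^ 2 ≤ P ^ 2 := sq_le_sq' (by linarith) hyP
    linarith
  -- assemble
  rw [ge_iff_le]
  have hcard : (Finset.Icc c e).card = K := by rw [Nat.card_Icc]; omega
  calc C * EQ = Real.sqrt n * (C * EQ / Real.sqrt n) := by field_simp
    _ ≤ (2 * (K:ℝ) * E2) * (C * EQ / Real.sqrt n) :=
        mul_le_mul_of_nonneg_right key (div_nonneg (mul_nonneg hCpos.le hEQpos.le) hsqn.le)
    _ = (K:ℝ) * (L * EP) := by
        rw [hsplit, hL]
        field_simp
    _ = (Finset.Icc c e).card • (L * EP) := by rw [hcard, nsmul_eq_mul]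
    _ ≤ ∑ y ∈ Finset.Icc c e, B y := Finset.card_nsmul_le_sum _ _ _ hterm
    _ ≤ ∑ y ∈ Finset.Icc c m, B y :=
        Finset.sum_le_sum_of_subset_of_nonneg
          (Finset.Icc_subset_Icc_right hem) (fun i _ _ => hBnn i)
end

section
/- Let X be a random variable with values in [0, n], mean Xbar, satisfying the sub-Gaussian tail bound P(X <= Xbar - i*sqrt(n)) <= exp(-2*i^2) for every integer i >= 0. Let f be a non-negative decreasing function on [0, n], and let i0 be the smallest nonnegative integer such that (i0 + 1)*sqrt(n) >= Xbar. Then E[f(X)] <= sum_{i=0}^{i0 - 1} exp(-2*i^2) * f(Xbar - (i+1)*sqrt(n)) + exp(-2*i0^2) * f(0). -/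
open MeasureTheory ProbabilityTheory

/-- Layered expectation bound: if `X ∈ [0, n]` has mean `Xbar` and sub-Gaussian lower
tail `P(X ≤ Xbar - i √n) ≤ exp(-2 i²)`, and `f` is non-negative and decreasing on
`[0, n]`, with `i0` the smallest nonnegative integer such that `(i0+1) √n ≥ Xbar`, then
`E[f(X)] ≤ ∑_{i=0}^{i0-1} exp(-2 i²) f(Xbar - (i+1) √n) + exp(-2 i0²) f(0)`. -/
theorem stmt_11 {Ω : Type*} [MeasureSpace Ω] [IsProbabilityMeasure (ℙ : Measure Ω)]
    (n : ℕ) (hn : 1 ≤ n) (X : Ω → ℝ) (hXm : Measurable X)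
    (hXrange : ∀ ω, X ω ∈ Set.Icc (0 : ℝ) n)
    (Xbar : ℝ) (hXbar : ∫ ω, X ω ∂(ℙ : Measure Ω) = Xbar)
    (htail : ∀ i : ℕ, ((ℙ : Measure Ω) {ω | X ω ≤ Xbar - i * Real.sqrt n}).toReal ≤ Real.exp (-2 * (i : ℝ) ^ 2))
    (f : ℝ → ℝ) (hfm : Measurable f)
    (hf0 : ∀ x ∈ Set.Icc (0 : ℝ) n, 0 ≤ f x)
    (hfdec : AntitoneOn f (Set.Icc (0 : ℝ) n))
    (i0 : ℕ) (hi0 : ((i0 : ℝ) + 1) * Real.sqrt n ≥ Xbar)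
    (hi0min : ∀ j : ℕ, j < i0 → ¬ (((j : ℝ) + 1) * Real.sqrt n ≥ Xbar)) :
    ∫ ω, f (X ω) ∂(ℙ : Measure Ω)
      ≤ ∑ i ∈ Finset.range i0,
          Real.exp (-2 * (i : ℝ) ^ 2) * f (Xbar - ((i : ℝ) + 1) * Real.sqrt n)
        + Real.exp (-2 * (i0 : ℝ) ^ 2) * f 0 := by
  have hn0 : (0:ℝ) ≤ n := Nat.cast_nonneg n
  have hs0 : (0:ℝ) ≤ Real.sqrt n := Real.sqrt_nonneg n
  have h0mem : (0:ℝ) ∈ Set.Icc (0:ℝ) n := ⟨le_refl 0, hn0⟩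
  have hfX_nonneg : ∀ ω, 0 ≤ f (X ω) := fun ω => hf0 _ (hXrange ω)
  have hfX_le : ∀ ω, f (X ω) ≤ f 0 := fun ω => hfdec h0mem (hXrange ω) (hXrange ω).1
  have hfXmeas : Measurable fun ω => f (X ω) := hfm.comp hXm
  have hfXint : Integrable (fun ω => f (X ω)) := by
    apply (integrable_const (f 0)).mono' hfXmeas.aestronglyMeasurable
    filter_upwards with ω
    rw [Real.norm_eq_abs, abs_of_nonneg (hfX_nonneg ω)]
    exact hfX_le ω
  have hXint : Integrable X := by
    apply (integrable_const (n:ℝ)).mono' hXm.aestronglyMeasurable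
    filter_upwards with ω
    rw [Real.norm_eq_abs, abs_of_nonneg (hXrange ω).1]
    exact (hXrange ω).2
  have hXbarn : Xbar ≤ n := by
    rw [← hXbar]
    calc ∫ ω, X ω ≤ ∫ _ω, (n:ℝ) :=
          integral_mono hXint (integrable_const _) fun ω => (hXrange ω).2
      _ = n := by simp
  set E : ℕ → Set Ω := fun i => {ω | X ω ≤ Xbar - i * Real.sqrt n} with hE
  have hEm : ∀ i, MeasurableSet (E i) := fun i => measurableSet_le hXm measurable_const
  have hEmono : ∀ i, E (i+1) ⊆ E i := by
    intro i ω hω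
    simp only [hE, Set.mem_setOf_eq] at *
    have h : Xbar - (↑(i+1) : ℝ) * Real.sqrt n ≤ Xbar - i * Real.sqrt n := by
      push_cast; nlinarith
    linarith
  have hbound : ∀ (s : Set Ω) (c : ℝ), MeasurableSet s → (∀ ω ∈ s, f (X ω) ≤ c) →
      ∫ ω in s, f (X ω) ≤ c * (ℙ s).toReal := by
    intro s c hsm hc
    calc ∫ ω in s, f (X ω) ≤ ∫ _ω in s, c :=
          setIntegral_mono_on hfXint.integrableOn
            (integrableOn_const (measure_ne_top _ _)) hsm hc
      _ = (ℙ s).toReal * c := by rw [setIntegral_const, smul_eq_mul]; rfl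
      _ = c * (ℙ s).toReal := mul_comm _ _
  have hep : ∀ k : ℕ, 1 ≤ k → k ≤ i0 → Xbar - (k:ℝ) * Real.sqrt n ∈ Set.Icc (0:ℝ) n := by
    intro k h1 h2
    obtain ⟨j, rfl⟩ : ∃ j, k = j + 1 := ⟨k - 1, by omega⟩
    have hj := hi0min j (by omega)
    push_neg at hj
    have hk : (↑(j+1) : ℝ) * Real.sqrt n < Xbar := by push_cast; push_cast at hj; linarith
    constructor
    · linarith
    · have : (0:ℝ) ≤ (↑(j+1) : ℝ) * Real.sqrt n := by positivity
      linarith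
  have key : ∀ d : ℕ, d ≤ i0 →
      ∫ ω in E (i0 - d), f (X ω) ≤
        (∑ i ∈ Finset.Ico (i0 - d) i0,
            Real.exp (-2 * (i:ℝ)^2) * f (Xbar - ((i:ℝ)+1) * Real.sqrt n))
        + Real.exp (-2 * (i0:ℝ)^2) * f 0 := by
    intro d
    induction d with
    | zero =>
      intro _
      simp only [Nat.sub_zero, Finset.Ico_self, Finset.sum_empty, zero_add]
      calc ∫ ω in E i0, f (X ω) ≤ f 0 * (ℙ (E i0)).toReal :=
            hbound _ _ (hEm i0) fun ω _ => hfX_le ω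
        _ ≤ f 0 * Real.exp (-2 * (i0:ℝ)^2) :=
            mul_le_mul_of_nonneg_left (htail i0) (hf0 0 h0mem)
        _ = _ := mul_comm _ _
    | succ d ih =>
      intro hd
      set k := i0 - (d+1) with hk
      have hk1 : k + 1 = i0 - d := by omega
      have hkk : k < i0 := by omega
      have hsplit : E k = E (k+1) ∪ (E k \ E (k+1)) := (Set.union_diff_cancel (hEmono k)).symm
      have h1 : ∫ ω in E k, f (X ω)
          = (∫ ω in E (k+1), f (X ω)) + ∫ ω in E k \ E (k+1), f (X ω) := by
        conv_lhs => rw [hsplit]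
        exact setIntegral_union disjoint_sdiff_self_right ((hEm k).diff (hEm (k+1)))
          hfXint.integrableOn hfXint.integrableOn
      have hepk := hep (k+1) (by omega) (by omega)
      push_cast at hepk
      have hfnn : 0 ≤ f (Xbar - ((k:ℝ)+1) * Real.sqrt n) := hf0 _ hepk
      have h2 : ∫ ω in E k \ E (k+1), f (X ω)
          ≤ Real.exp (-2*(k:ℝ)^2) * f (Xbar - ((k:ℝ)+1) * Real.sqrt n) := by
        have hc : ∀ ω ∈ E k \ E (k+1), f (X ω) ≤ f (Xbar - ((k:ℝ)+1) * Real.sqrt n) := by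
          intro ω hω
          have hnot : ¬ X ω ≤ Xbar - (↑(k+1) : ℝ) * Real.sqrt n := hω.2
          push_neg at hnot
          push_cast at hnot
          exact hfdec hepk (hXrange ω) (le_of_lt hnot)
        calc ∫ ω in E k \ E (k+1), f (X ω)
            ≤ f (Xbar - ((k:ℝ)+1) * Real.sqrt n) * (ℙ (E k \ E (k+1))).toReal :=
              hbound _ _ ((hEm k).diff (hEm (k+1))) hc
          _ ≤ f (Xbar - ((k:ℝ)+1) * Real.sqrt n) * (ℙ (E k)).toReal := by
              apply mul_le_mul_of_nonneg_left _ hfnn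
              exact ENNReal.toReal_mono (measure_ne_top _ _) (measure_mono Set.diff_subset)
          _ ≤ f (Xbar - ((k:ℝ)+1) * Real.sqrt n) * Real.exp (-2*(k:ℝ)^2) :=
              mul_le_mul_of_nonneg_left (htail k) hfnn
          _ = _ := mul_comm _ _
      have ih' := ih (by omega)
      rw [← hk1] at ih'
      have hsum : ∑ i ∈ Finset.Ico k i0,
            Real.exp (-2 * (i:ℝ)^2) * f (Xbar - ((i:ℝ)+1) * Real.sqrt n)
          = Real.exp (-2 * (k:ℝ)^2) * f (Xbar - ((k:ℝ)+1) * Real.sqrt n)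
            + ∑ i ∈ Finset.Ico (k+1) i0,
                Real.exp (-2 * (i:ℝ)^2) * f (Xbar - ((i:ℝ)+1) * Real.sqrt n) :=
        Finset.sum_eq_sum_Ico_succ_bot hkk _
      rw [h1, hsum]
      linarith
  rcases Nat.eq_zero_or_pos i0 with h0 | hpos
  · subst h0
    simp only [Finset.range_zero, Finset.sum_empty, zero_add, Nat.cast_zero]
    have he : Real.exp (-2 * (0:ℝ)^2) = 1 := by norm_num
    rw [he, one_mul]
    calc ∫ ω, f (X ω) ≤ ∫ _ω, f 0 := integral_mono hfXint (integrable_const _) hfX_le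
      _ = f 0 := by simp
  · have hkey := key (i0 - 1) (by omega)
    have h1 : i0 - (i0 - 1) = 1 := by omega
    rw [h1] at hkey
    have hsplitall : ∫ ω, f (X ω)
        = (∫ ω in E 1, f (X ω)) + ∫ ω in (E 1)ᶜ, f (X ω) :=
      (integral_add_compl (hEm 1) hfXint).symm
    have hep1 := hep 1 le_rfl hpos
    push_cast at hep1
    have hfnn1 : 0 ≤ f (Xbar - 1 * Real.sqrt n) := hf0 _ hep1
    have htop : ∫ ω in (E 1)ᶜ, f (X ω)
        ≤ Real.exp (-2*(0:ℝ)^2) * f (Xbar - ((0:ℝ)+1) * Real.sqrt n) := by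
      have hc : ∀ ω ∈ (E 1)ᶜ, f (X ω) ≤ f (Xbar - 1 * Real.sqrt n) := by
        intro ω hω
        simp only [hE, Set.mem_compl_iff, Set.mem_setOf_eq, not_le, Nat.cast_one] at hω
        exact hfdec hep1 (hXrange ω) (le_of_lt hω)
      have hP : (ℙ ((E 1)ᶜ)).toReal ≤ 1 := by
        have := prob_le_one (μ := (ℙ : Measure Ω)) (s := (E 1)ᶜ)
        simpa using ENNReal.toReal_mono ENNReal.one_ne_top this
      calc ∫ ω in (E 1)ᶜ, f (X ω)
          ≤ f (Xbar - 1 * Real.sqrt n) * (ℙ ((E 1)ᶜ)).toReal :=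
            hbound _ _ (hEm 1).compl hc
        _ ≤ f (Xbar - 1 * Real.sqrt n) * 1 := mul_le_mul_of_nonneg_left hP hfnn1
        _ = Real.exp (-2*(0:ℝ)^2) * f (Xbar - ((0:ℝ)+1) * Real.sqrt n) := by norm_num
    have hsum : ∑ i ∈ Finset.range i0,
          Real.exp (-2 * (i:ℝ)^2) * f (Xbar - ((i:ℝ)+1) * Real.sqrt n)
        = Real.exp (-2 * (0:ℝ)^2) * f (Xbar - ((0:ℝ)+1) * Real.sqrt n)
          + ∑ i ∈ Finset.Ico 1 i0,
              Real.exp (-2 * (i:ℝ)^2) * f (Xbar - ((i:ℝ)+1) * Real.sqrt n) := by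
      rw [Finset.range_eq_Ico, Finset.sum_eq_sum_Ico_succ_bot hpos]
      norm_num
    rw [hsplitall, hsum]
    linarith
end
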